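/- Let R be a commutative ring in which every strong parameter sequence x satisfies p-grade((x)R, R) = ℓ(x). Then every strong parameter sequence on R is a regular sequence (i.e., R is Cohen-Macaulay). -/

import Mathlib

/-- The natural map between localizations of a module at powers of two elements
`a ∣ b`, sending `m/1` to `m/1`. -/

noncomputable def cechLoc {R : Type*} [CommRing R] {M : Type*} [AddCommGroup M] [Module R M]
    (a b : R) (hab : a ∣ b) :
    LocalizedModule (Submonoid.powers a) M →ₗ[R] LocalizedModule (Submonoid.powers b) M :=
  LocalizedModule.lift _ (LocalizedModule.mkLinearMap (Submonoid.powers b) M) (by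
    rintro ⟨s, n, rfl⟩
    obtain ⟨c, rfl⟩ := hab
    set f := algebraMap R (Module.End R (LocalizedModule (Submonoid.powers (a * c)) M)) with hf
    obtain ⟨u, hu⟩ := IsLocalizedModule.map_units
      (LocalizedModule.mkLinearMap (Submonoid.powers (a * c)) M)
      (⟨(a * c) ^ n, n, rfl⟩ : Submonoid.powers (a * c))
    have hcomm : Commute (f (a ^ n)) ↑u := by
      have : Commute (f (a ^ n)) (f ((a * c) ^ n)) := by
        simp only [Commute, SemiconjBy, ← map_mul, mul_comm]
      rwa [← hu] at this
    refine ⟨⟨f (a ^ n), f (c ^ n) * ↑u⁻¹, ?_, ?_⟩, rfl⟩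
    · rw [← mul_assoc, ← map_mul, ← mul_pow, ← hu]
      exact u.mul_inv
    · rw [mul_assoc, ← (hcomm.units_inv_right).eq, ← mul_assoc, ← map_mul]
      have : c ^ n * a ^ n = (a * c) ^ n := by ring
      rw [this, ← hu]
      exact u.mul_inv)

open scoped BigOperators
open Classical

noncomputable section

universe u
variable {R : Type u} [CommRing R]

/-- Degree `i` term of the Čech complex of the sequence `x` with coefficients in `M`:
the product over `i`-element subsets `t` of the index set of the localization of `M`
at the product of the `x j` for `j ∈ t`. -/
noncomputable abbrev CechC {ℓ : ℕ} (x : Fin ℓ → R) (M : Type*) [AddCommGroup M] [Module R M]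
    (i : ℕ) : Type _ :=
  ∀ t : {t : Finset (Fin ℓ) // t.card = i}, LocalizedModule (Submonoid.powers (∏ j ∈ t.1, x j)) M

/-- The Čech differential `C^i → C^{i+1}`: the alternating sum of the further-localization
maps. -/
noncomputable def cechD {ℓ : ℕ} (x : Fin ℓ → R) (M : Type*) [AddCommGroup M] [Module R M]
    (i : ℕ) : CechC x M i →ₗ[R] CechC x M (i + 1) where
  toFun m t := ∑ j ∈ (t.1).attach,
    ((-1 : ℤ) ^ ((t.1.filter (· < j.1)).card)) •
      cechLoc (∏ k ∈ t.1.erase j.1, x k) (∏ k ∈ t.1, x k)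
        (Finset.prod_dvd_prod_of_subset _ _ _ (Finset.erase_subset _ _))
        (m ⟨t.1.erase j.1, by rw [Finset.card_erase_of_mem j.2, t.2]; omega⟩)
  map_add' := by
    intro a b
    funext t
    simp [Pi.add_apply, map_add, smul_add, Finset.sum_add_distrib]
    all_goals (rw [← Finset.sum_add_distrib]; refine Finset.sum_congr rfl fun j _ => ?_; first | exact smul_add _ _ _ | exact zsmul_add _ _ _ | exact (smul_add _ _ _ :))
  map_smul' := by
    intro r a
    funext t
    simp [Pi.smul_apply, map_smul, Finset.smul_sum, smul_comm r]

/-- The submodule of Čech coboundaries in degree `i`. -/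
noncomputable def cechPrevRange {ℓ : ℕ} (x : Fin ℓ → R) (M : Type*) [AddCommGroup M]
    [Module R M] : (i : ℕ) → Submodule R (CechC x M i)
  | 0 => ⊥
  | (i + 1) => LinearMap.range (cechD x M i)

/-- The `i`-th Čech cohomology of `M` with respect to the sequence `x`:
cocycles modulo coboundaries. -/
noncomputable abbrev CechH {ℓ : ℕ} (x : Fin ℓ → R) (M : Type*) [AddCommGroup M] [Module R M]
    (i : ℕ) : Type _ :=
  LinearMap.ker (cechD x M i) ⧸
    (cechPrevRange x M i).comap (LinearMap.ker (cechD x M i)).subtype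


/-- Degree `i` term of the Koszul complex on `ℓ` elements: free module indexed by
`i`-element subsets of the index set. -/
abbrev KoszulC (R : Type*) [CommRing R] (ℓ i : ℕ) : Type _ :=
  {t : Finset (Fin ℓ) // t.card = i} → R

/-- The Koszul differential `K_{i+1} → K_i` for the sequence `x^k = x_1^k, ..., x_ℓ^k`. -/
noncomputable def koszulD {ℓ : ℕ} (x : Fin ℓ → R) (k : ℕ) (i : ℕ) :
    KoszulC R ℓ (i + 1) →ₗ[R] KoszulC R ℓ i where
  toFun m s := ∑ j ∈ (s.1ᶜ).attach,
    ((-1 : ℤ) ^ ((s.1.filter (· < j.1)).card)) •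
      ((x j.1 ^ k) * m ⟨insert j.1 s.1, by
        rw [Finset.card_insert_of_notMem (Finset.mem_compl.mp j.2), s.2]⟩)
  map_add' := by
    intro a b
    funext s
    simp [mul_add, smul_add, Finset.sum_add_distrib]
  map_smul' := by
    intro r a
    funext s
    simp [Finset.mul_sum, mul_smul_comm, mul_left_comm]
  
/-- The standard transition chain map `K(x^m) → K(x^n)` (for `n ≤ m`) in degree `i`:
multiplication on the component indexed by `t` by `∏_{j ∈ t} x_j^{m-n}`. -/
noncomputable def koszulTr {ℓ : ℕ} (x : Fin ℓ → R) (m n i : ℕ) :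
    KoszulC R ℓ i →ₗ[R] KoszulC R ℓ i where
  toFun z t := (∏ j ∈ t.1, x j ^ (m - n)) * z t
  map_add' := by intro a b; funext t; simp [mul_add]
  map_smul' := by intro r a; funext t; simp; ring

/-- A finite sequence `x` is weakly proregular if for each `n` there is `m ≥ n` such that
the transition maps `H_i(x^m; R) → H_i(x^n; R)` on Koszul homology vanish for all `i ≥ 1`;
equivalently, the transition image of every cycle is a boundary. -/
def WeaklyProregular {ℓ : ℕ} (x : Fin ℓ → R) : Prop :=
  ∀ n : ℕ, 1 ≤ n → ∃ m, n ≤ m ∧ ∀ i : ℕ, ∀ z : KoszulC R ℓ (i + 1),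
    koszulD x m i z = 0 →
      ∃ b : KoszulC R ℓ (i + 1 + 1), koszulD x n (i + 1) b = koszulTr x m n (i + 1) z

/-- The height of an ideal: the infimum of the heights of the primes containing it. -/
noncomputable def idealHeight (I : Ideal R) : ℕ∞ :=
  ⨅ p : {p : PrimeSpectrum R // I ≤ p.asIdeal}, Order.height p.1


/-- A finite sequence `x` (given as a list `l`) is a parameter sequence on `R` if it is
weakly proregular, generates a proper ideal, and the localized top Čech cohomology
`H^{ℓ(x)}_x(R)_p` is nonzero for every prime `p` containing `(x)R`. -/
def IsParamSeq (l : List R) : Prop :=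
  WeaklyProregular l.get ∧ Ideal.span {a | a ∈ l} ≠ ⊤ ∧
    ∀ p : PrimeSpectrum R, Ideal.span {a | a ∈ l} ≤ p.asIdeal →
      Nontrivial (LocalizedModule p.asIdeal.primeCompl (CechH l.get R l.length))

/-- A strong parameter sequence: every initial segment is a parameter sequence. -/
def IsStrongParamSeq (l : List R) : Prop :=
  ∀ i : ℕ, i ≤ l.length → IsParamSeq (l.take i)


/-- `PossiblyImproperRegular R l N`: the list `l` is a possibly improper regular sequence on
the `R`-module `N`. -/
def PossiblyImproperRegular (R : Type u) [CommRing R] :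
    List R → (N : Type u) → [inst : AddCommGroup N] → [inst2 : Module R N] → Prop
  | [], _, _, _ => True
  | a :: as, N, _, _ => (∀ m : N, a • m = 0 → m = 0) ∧
      PossiblyImproperRegular R as (N ⧸ (Ideal.span {a} • (⊤ : Submodule R N)))

variable (R) in
/-- The list `l` is a regular sequence on the ring `R`. -/
def IsRegularSeq (l : List R) : Prop :=
  PossiblyImproperRegular R l R ∧ Ideal.span {a | a ∈ l} ≠ ⊤

/-- The classical grade of an ideal `I` on an `R`-module `N`: the supremum of lengths of
possibly improper regular sequences on `N` contained in `I`. -/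
noncomputable def classicalGrade (I : Ideal R) (N : Type u) [AddCommGroup N] [Module R N] :
    ℕ∞ :=
  ⨆ (l : List R) (_ : ∀ a ∈ l, a ∈ I) (_ : PossiblyImproperRegular R l N), (l.length : ℕ∞)

/-- The polynomial grade of an ideal `I` of `R`: the limit (supremum) over `m` of the
classical grades of `I·R[t_1, ..., t_m]` on `R[t_1, ..., t_m]`. -/
noncomputable def pgrade (I : Ideal R) : ℕ∞ :=
  ⨆ m : ℕ, classicalGrade (I.map (algebraMap R (MvPolynomial (Fin m) R)))
    (MvPolynomial (Fin m) R)


namespace StmtAux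

variable {S : Type*} [CommRing S] {r : ℕ}

/-- sign -/
def eps (j : Fin r) (t : Finset (Fin r)) : S :=
  (-1 : S) ^ (t.filter (fun k => k < j)).card

lemma eps_sq (j : Fin r) (t : Finset (Fin r)) : (eps j t : S) * eps j t = 1 := by
  rw [eps, ← pow_add]
  exact Even.neg_one_pow ⟨_, rfl⟩

lemma filter_erase (k j : Fin r) (t : Finset (Fin r)) :
    (t.erase k).filter (fun x => x < j) = (t.filter (fun x => x < j)).erase k := by
  ext x
  simp [Finset.mem_filter, Finset.mem_erase]
  tauto

lemma eps_erase_of_not_lt {k j : Fin r} (t : Finset (Fin r)) (hkj : ¬ k < j) :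
    (eps j (t.erase k) : S) = eps j t := by
  rw [eps, eps, filter_erase, Finset.erase_eq_of_notMem]
  simp [Finset.mem_filter, hkj]

lemma eps_erase_of_lt {k j : Fin r} {t : Finset (Fin r)} (hk : k ∈ t) (hkj : k < j) :
    (eps j (t.erase k) : S) = - eps j t := by
  have hmem : k ∈ t.filter (fun x => x < j) := Finset.mem_filter.2 ⟨hk, hkj⟩
  rw [eps, eps, filter_erase, Finset.card_erase_of_mem hmem]
  have hpos : 0 < (t.filter (fun x => x < j)).card := Finset.card_pos.2 ⟨k, hmem⟩
  calc (-1 : S) ^ ((t.filter (fun x => x < j)).card - 1)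
      = - ((-1 : S) ^ ((t.filter (fun x => x < j)).card - 1) * (-1)) := by ring
    _ = - (-1 : S) ^ ((t.filter (fun x => x < j)).card - 1 + 1) := by rw [pow_succ]
    _ = - (-1 : S) ^ (t.filter (fun x => x < j)).card := by rw [Nat.sub_add_cancel hpos]

lemma eps_antisym {j k : Fin r} {t : Finset (Fin r)} (hj : j ∈ t) (hk : k ∈ t)
    (hne : j ≠ k) :
    (eps j t : S) * eps k (t.erase j) = - (eps k t * eps j (t.erase k)) := by
  rcases lt_or_gt_of_ne hne with h | h
  · rw [eps_erase_of_lt hj h, eps_erase_of_not_lt _ (lt_asymm h)]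
    ring
  · rw [eps_erase_of_not_lt _ (lt_asymm h), eps_erase_of_lt hk h]
    ring

lemma eps_antisym' {j i : Fin r} {t : Finset (Fin r)} (hj : j ∈ t) (hi : i ∈ t)
    (hne : i ≠ j) :
    (eps j (t.erase i) : S) * eps i (t.erase j) = - (eps i t * eps j t) := by
  rcases lt_or_gt_of_ne hne with h | h
  · rw [eps_erase_of_lt hi h, eps_erase_of_not_lt _ (lt_asymm h)]
    ring
  · rw [eps_erase_of_not_lt _ (lt_asymm h), eps_erase_of_lt hj h]
    ring

variable (a : Fin r → S)

/-- Koszul cochain differential -/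
def kd (c : Finset (Fin r) → S) : Finset (Fin r) → S :=
  fun t => ∑ j ∈ t, eps j t * (a j * c (t.erase j))

lemma kd_congr {c c' : Finset (Fin r) → S} {m : ℕ} (h : ∀ s, s.card = m → c s = c' s)
    {t : Finset (Fin r)} (ht : t.card = m + 1) : kd a c t = kd a c' t := by
  unfold kd
  refine Finset.sum_congr rfl fun j hj => ?_
  rw [h _ (by rw [Finset.card_erase_of_mem hj, ht]; rfl)]

lemma kd_add (c c' : Finset (Fin r) → S) (t : Finset (Fin r)) :
    kd a (fun s => c s + c' s) t = kd a c t + kd a c' t := by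
  unfold kd
  rw [← Finset.sum_add_distrib]
  exact Finset.sum_congr rfl fun j hj => by ring

lemma kd_smul (x : S) (c : Finset (Fin r) → S) (t : Finset (Fin r)) :
    kd a (fun s => x * c s) t = x * kd a c t := by
  unfold kd
  rw [Finset.mul_sum]
  exact Finset.sum_congr rfl fun j hj => by ring

lemma kd_mem {K : Ideal S} {c : Finset (Fin r) → S} {m : ℕ}
    (h : ∀ s, s.card = m → c s ∈ K) {t : Finset (Fin r)} (ht : t.card = m + 1) :
    kd a c t ∈ K := by
  refine Ideal.sum_mem _ fun j hj => ?_
  exact Ideal.mul_mem_left _ _ (Ideal.mul_mem_left _ _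
    (h _ (by rw [Finset.card_erase_of_mem hj, ht]; rfl)))

lemma kd_kd (c : Finset (Fin r) → S) (t : Finset (Fin r)) : kd a (kd a c) t = 0 := by
  unfold kd
  have : ∀ j ∈ t, eps j t * (a j * ∑ k ∈ t.erase j, eps k (t.erase j) *
      (a k * c ((t.erase j).erase k))) =
      ∑ k ∈ t.erase j, (eps j t * eps k (t.erase j)) * (a j * a k * c ((t.erase j).erase k)) := by
    intro j hj
    rw [Finset.mul_sum, Finset.mul_sum]
    exact Finset.sum_congr rfl fun k hk => by ring
  rw [Finset.sum_congr rfl this, Finset.sum_sigma']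
  refine Finset.sum_involution (fun p _ => ⟨p.2, p.1⟩) ?_ ?_ ?_ ?_
  · rintro ⟨j, k⟩ hp
    simp only [Finset.mem_sigma, Finset.mem_erase] at hp
    obtain ⟨hj, hk1, hk2⟩ := hp
    have hne : j ≠ k := fun h => hk1 h.symm
    have h1 : (t.erase j).erase k = (t.erase k).erase j := Finset.erase_right_comm
    rw [h1, eps_antisym hj hk2 hne]
    ring
  · rintro ⟨j, k⟩ hp _
    simp only [Finset.mem_sigma, Finset.mem_erase] at hp
    intro h
    have hkj : k = j := congrArg Sigma.fst h
    exact hp.2.1 hkj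
  · rintro ⟨j, k⟩ hp
    simp only [Finset.mem_sigma, Finset.mem_erase] at hp ⊢
    exact ⟨hp.2.2, Ne.symm hp.2.1, hp.1⟩
  · rintro ⟨j, k⟩ hp
    rfl


/-- contraction operator -/
def iota (i : Fin r) (c : Finset (Fin r) → S) : Finset (Fin r) → S :=
  fun t => if i ∈ t then 0 else eps i (insert i t) * c (insert i t)

lemma cartan (i : Fin r) (c : Finset (Fin r) → S) (t : Finset (Fin r)) :
    kd a (iota i c) t + iota i (kd a c) t = a i * c t := by
  by_cases hi : i ∈ t
  · rw [iota, if_pos hi, add_zero, kd]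
    rw [Finset.sum_eq_single_of_mem i hi]
    · rw [iota, if_neg (Finset.notMem_erase i t), Finset.insert_erase hi]
      calc eps i t * (a i * (eps i t * c t)) = (eps i t * eps i t) * (a i * c t) := by ring
        _ = a i * c t := by rw [eps_sq, one_mul]
    · intro j hj hji
      rw [iota, if_pos (Finset.mem_erase.2 ⟨fun h => hji h.symm, hi⟩), mul_zero, mul_zero]
  · set t' := insert i t with ht'
    have hit' : i ∈ t' := Finset.mem_insert_self i t
    have h2 : iota i (kd a c) t = a i * c t +
        ∑ j ∈ t, (eps i t' * eps j t') * (a j * c (t'.erase j)) := by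
      rw [iota, if_neg hi, kd, Finset.mul_sum, ← ht', Finset.sum_insert hi]
      congr 1
      · rw [Finset.erase_insert hi]
        calc eps i t' * (eps i t' * (a i * c t)) = (eps i t' * eps i t') * (a i * c t) := by ring
          _ = a i * c t := by rw [eps_sq, one_mul]
      · exact Finset.sum_congr rfl fun j hj => by ring
    have h1 : kd a (iota i c) t = ∑ j ∈ t, (eps j t * eps i (t'.erase j)) *
        (a j * c (t'.erase j)) := by
      rw [kd]
      refine Finset.sum_congr rfl fun j hj => ?_
      have hij : i ≠ j := fun h => hi (h ▸ hj)
      have hie : i ∉ t.erase j := fun h => hi (Finset.mem_of_mem_erase h)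
      rw [iota, if_neg hie, Finset.erase_insert_of_ne hij]
      ring
    rw [h1, h2, ← add_assoc, add_comm _ (a i * c t), add_assoc, ← Finset.sum_add_distrib]
    have : ∀ j ∈ t, (eps j t * eps i (t'.erase j)) * (a j * c (t'.erase j)) +
        (eps i t' * eps j t') * (a j * c (t'.erase j)) = 0 := by
      intro j hj
      have hjt' : j ∈ t' := Finset.mem_insert_of_mem hj
      have hij : i ≠ j := fun h => hi (h ▸ hj)
      have heq : eps j (t'.erase i) * eps i (t'.erase j) = - ((eps i t' : S) * eps j t') :=
        eps_antisym' hjt' hit' hij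
      rw [Finset.erase_insert hi] at heq
      rw [heq]
      ring
    rw [Finset.sum_congr rfl this, Finset.sum_const_zero, add_zero]


lemma kd_sub (c c' : Finset (Fin r) → S) (t : Finset (Fin r)) :
    kd a (fun s => c s - c' s) t = kd a c t - kd a c' t := by
  unfold kd
  rw [← Finset.sum_sub_distrib]
  exact Finset.sum_congr rfl fun j hj => by ring

lemma kd_fin_sum {m : ℕ} (f : Fin m → Finset (Fin r) → S) (t : Finset (Fin r)) :
    kd a (fun s => ∑ i, f i s) t = ∑ i, kd a (f i) t := by
  unfold kd
  have h : ∀ j ∈ t, eps j t * (a j * ∑ i, f i (t.erase j))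
      = ∑ i, eps j t * (a j * f i (t.erase j)) := fun j hj => by
    rw [Finset.mul_sum, Finset.mul_sum]
  rw [Finset.sum_congr rfl h]
  exact Finset.sum_comm

/-- `x` is a non-zero-divisor modulo the ideal `K`. -/
def NzdMod (K : Ideal S) (x : S) : Prop := ∀ y, x * y ∈ K → y ∈ K

/-- ideal-theoretic form of a possibly improper regular sequence on `S/K` -/
def SeqReg (K : Ideal S) : List S → Prop
  | [] => True
  | x :: l => NzdMod K x ∧ SeqReg (K ⊔ Ideal.span {x}) l

/-- Koszul cohomology of `a` with coefficients in `S/K` vanishes in degrees `< n`. -/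
def Van (K : Ideal S) (n : ℕ) : Prop :=
  ∀ j, j < n → ∀ z : Finset (Fin r) → S,
    (∀ t : Finset (Fin r), t.card = j + 1 → kd a z t ∈ K) →
    ∃ w, ∀ t : Finset (Fin r), t.card = j → z t - kd a w t ∈ K


lemma eps_singleton (i : Fin r) : (eps i {i} : S) = 1 := by
  rw [eps]
  have h0 : ({i} : Finset (Fin r)).filter (fun k => k < i) = ∅ := by
    ext x
    simp only [Finset.mem_filter, Finset.mem_singleton, Finset.notMem_empty,
      iff_false, not_and]
    rintro rfl
    exact lt_irrefl _
  rw [h0, Finset.card_empty, pow_zero]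

lemma ai_mul_mem {K : Ideal S} (z : Finset (Fin r) → S)
    (hz : ∀ t : Finset (Fin r), t.card = 1 → kd a z t ∈ K) (i : Fin r) :
    a i * z ∅ ∈ K := by
  have h := hz {i} (Finset.card_singleton i)
  rw [kd, Finset.sum_singleton, Finset.erase_singleton] at h
  have he : (eps i {i} : S) = 1 := by
    rw [eps]
    have h0 : ({i} : Finset (Fin r)).filter (fun k => k < i) = ∅ := by
      ext x
      simp only [Finset.mem_filter, Finset.mem_singleton, Finset.notMem_empty,
        iff_false, not_and]
      rintro rfl
      exact lt_irrefl _
    rw [h0, Finset.card_empty, pow_zero]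
  rwa [he, one_mul] at h

lemma van_of_seqReg : ∀ (l : List S) (K : Ideal S),
    (∀ g ∈ l, g ∈ Ideal.span (Set.range a)) → SeqReg K l → Van a K l.length := by
  intro l
  induction l with
  | nil =>
    intro K _ _ j hj
    simp only [List.length_nil] at hj
    omega
  | cons g l IH =>
    intro K hmem hsr
    obtain ⟨hreg, hrest⟩ := hsr
    have hgJ : g ∈ Ideal.span (Set.range a) := hmem g List.mem_cons_self
    obtain ⟨c, hc⟩ := (Submodule.mem_span_range_iff_exists_fun S).1 hgJ
    intro j hj z hz
    match j, hj with
    | 0, hj =>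
      refine ⟨fun _ => 0, fun t ht => ?_⟩
      have h0 : kd a (fun _ => (0:S)) t = 0 := by
        unfold kd
        exact Finset.sum_eq_zero fun j hj => by rw [mul_zero, mul_zero]
      rw [h0, sub_zero]
      have hgz : g * z t ∈ K := by
        rw [Finset.card_eq_zero] at ht
        subst ht
        rw [← hc, Finset.sum_mul]
        refine Ideal.sum_mem _ fun i _ => ?_
        rw [smul_eq_mul, mul_assoc]
        exact Ideal.mul_mem_left _ _ (ai_mul_mem a z hz i)
      exact hreg _ hgz
    | (j' + 1), hj =>
      have hj' : j' < l.length := by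
        simpa using Nat.lt_of_succ_lt_succ hj
      set w₁ : Finset (Fin r) → S := fun s => ∑ i, c i * iota i z s with hw₁
      have hkdw₁ : ∀ t : Finset (Fin r), t.card = j' + 1 → kd a w₁ t - g * z t ∈ K := by
        intro t ht
        have hiK : ∀ i : Fin r, iota i (kd a z) t ∈ K := by
          intro i
          rw [iota]
          split
          · exact Ideal.zero_mem K
          · next hi =>
            exact Ideal.mul_mem_left _ _
              (hz _ (by rw [Finset.card_insert_of_notMem hi, ht]))
        have h1 : kd a w₁ t = ∑ i, c i * kd a (iota i z) t := by
          rw [hw₁, kd_fin_sum a]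
          exact Finset.sum_congr rfl fun i _ => kd_smul a (c i) (iota i z) t
        have h2 : ∀ i : Fin r, kd a (iota i z) t = a i * z t - iota i (kd a z) t :=
          fun i => eq_sub_of_add_eq (cartan a i z t)
        have h3 : kd a w₁ t - g * z t = - ∑ i, c i * iota i (kd a z) t := by
          rw [h1]
          have h4 : ∑ i, c i * kd a (iota i z) t
              = (∑ i, c i * (a i * z t)) - ∑ i, c i * iota i (kd a z) t := by
            rw [← Finset.sum_sub_distrib]
            exact Finset.sum_congr rfl fun i _ => by rw [h2 i]; ring
          have h5 : ∑ i, c i * (a i * z t) = g * z t := by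
            rw [← hc, Finset.sum_mul]
            exact Finset.sum_congr rfl fun i _ => by rw [smul_eq_mul]; ring
          rw [h4, h5]
          ring
        rw [h3]
        exact neg_mem (Ideal.sum_mem _ fun i _ => Ideal.mul_mem_left _ _ (hiK i))
      have hcoc : ∀ t : Finset (Fin r), t.card = j' + 1 →
          kd a w₁ t ∈ K ⊔ Ideal.span {g} := by
        intro t ht
        have he : kd a w₁ t = (kd a w₁ t - g * z t) + g * z t := by ring
        rw [he]
        refine add_mem (Ideal.mem_sup_left (hkdw₁ t ht)) (Ideal.mem_sup_right ?_)
        exact Ideal.mem_span_singleton'.2 ⟨z t, by ring⟩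
      obtain ⟨v, hv⟩ := IH (K ⊔ Ideal.span {g})
        (fun x hx => hmem x (List.mem_cons_of_mem g hx)) hrest j' hj' w₁ hcoc
      have hex : ∀ t : Finset (Fin r), ∃ u' : S,
          t.card = j' → w₁ t - kd a v t - g * u' ∈ K := by
        intro t
        by_cases ht : t.card = j'
        · have h6 := hv t ht
          rw [Submodule.mem_sup] at h6
          obtain ⟨y, hy, z', hz', hyz⟩ := h6
          obtain ⟨u', hu'⟩ := Ideal.mem_span_singleton'.1 hz'
          refine ⟨u', fun _ => ?_⟩
          have : w₁ t - kd a v t - g * u' = y := by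
            rw [← hyz, ← hu']
            ring
          rw [this]
          exact hy
        · exact ⟨0, fun h => absurd h ht⟩
      choose u hu using hex
      set k' : Finset (Fin r) → S := fun t => w₁ t - kd a v t - g * u t with hk'
      refine ⟨u, fun t ht => ?_⟩
      have hw₁eq : w₁ = fun s => (kd a v s + k' s) + g * u s := by
        funext s
        rw [hk']
        ring
      have h7 : kd a w₁ t = kd a k' t + g * kd a u t := by
        rw [hw₁eq, kd_add, kd_add, kd_kd, zero_add, ← kd_smul a g u t]
      have h8 : kd a k' t ∈ K := kd_mem a (fun s hs => hu s hs) ht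
      have h9 : g * (z t - kd a u t) ∈ K := by
        have : g * (z t - kd a u t) = kd a k' t - (kd a w₁ t - g * z t) := by
          rw [h7]
          ring
        rw [this]
        exact sub_mem h8 (hkdw₁ t ht)
      exact hreg _ h9

lemma van_cut {K : Ideal S} {n : ℕ} {x : S} (hV : Van a K (n + 1)) (hx : NzdMod K x) :
    Van a (K ⊔ Ideal.span {x}) n := by
  intro j hj z hz
  have hex : ∀ t : Finset (Fin r), ∃ y' : S,
      t.card = j + 1 → kd a z t - x * y' ∈ K := by
    intro t
    by_cases ht : t.card = j + 1
    · have h6 := hz t ht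
      rw [Submodule.mem_sup] at h6
      obtain ⟨y, hy, z', hz', hyz⟩ := h6
      obtain ⟨u', hu'⟩ := Ideal.mem_span_singleton'.1 hz'
      refine ⟨u', fun _ => ?_⟩
      have : kd a z t - x * u' = y := by
        rw [← hyz, ← hu']
        ring
      rw [this]
      exact hy
    · exact ⟨0, fun h => absurd h ht⟩
  choose y hy using hex
  set k' : Finset (Fin r) → S := fun t => kd a z t - x * y t with hk'
  have hky : ∀ t : Finset (Fin r), t.card = j + 2 → kd a y t ∈ K := by
    intro t ht
    have h1 : kd a k' t = kd a (kd a z) t - x * kd a y t := by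
      rw [hk']
      have : (fun s => kd a z s - x * y s) = fun s => kd a z s - (fun s' => x * y s') s := rfl
      rw [this, kd_sub, kd_smul]
    have h2 : kd a k' t ∈ K := kd_mem a (fun s hs => hy s hs) ht
    rw [h1, kd_kd, zero_sub] at h2
    have h3 := neg_mem h2
    rw [neg_neg] at h3
    exact hx _ h3
  obtain ⟨w, hw⟩ := hV (j + 1) (Nat.succ_lt_succ hj) y hky
  set ζ : Finset (Fin r) → S := fun t => z t - x * w t with hζ
  have hζc : ∀ t : Finset (Fin r), t.card = j + 1 → kd a ζ t ∈ K := by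
    intro t ht
    have h1 : kd a ζ t = kd a z t - x * kd a w t := by
      rw [hζ]
      have : (fun s => z s - x * w s) = fun s => z s - (fun s' => x * w s') s := rfl
      rw [this, kd_sub, kd_smul]
    have h2 : kd a ζ t = k' t + x * (y t - kd a w t) := by
      rw [h1, hk']
      ring
    rw [h2]
    exact add_mem (hy t ht) (Ideal.mul_mem_left _ _ (hw t ht))
  obtain ⟨v, hv⟩ := hV j (Nat.lt_succ_of_lt hj) ζ hζc
  refine ⟨v, fun t ht => ?_⟩
  have : z t - kd a v t = (ζ t - kd a v t) + x * w t := by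
    rw [hζ]
    ring
  rw [this]
  exact add_mem (Ideal.mem_sup_left (hv t ht))
    (Ideal.mem_sup_right (Ideal.mem_span_singleton'.2 ⟨w t, by ring⟩))


section Plumbing

variable {A : Type u} [CommRing A]

lemma NzdMod.congr {K K' : Ideal A} {x : A} (h : NzdMod K x) (e : K = K') : NzdMod K' x :=
  e ▸ h

lemma span_list_nil : Ideal.span {a | a ∈ ([] : List A)} = ⊥ := by
  have h : {a | a ∈ ([] : List A)} = (∅ : Set A) := by ext b; simp
  rw [h, Ideal.span_empty]

lemma span_list_cons (x : A) (l : List A) :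
    Ideal.span {a | a ∈ x :: l} = Ideal.span {x} ⊔ Ideal.span {a | a ∈ l} := by
  have h : {a | a ∈ x :: l} = insert x {a | a ∈ l} := by ext b; simp
  rw [h, Ideal.span_insert]

lemma span_list_append (l : List A) (x : A) :
    Ideal.span {a | a ∈ l ++ [x]} = Ideal.span {a | a ∈ l} ⊔ Ideal.span {x} := by
  have h : {a | a ∈ l ++ [x]} = {a | a ∈ l} ∪ {x} := by
    ext b; simp [List.mem_append]; tauto
  rw [h, Ideal.span_union]

lemma seqReg_snoc {x : A} : ∀ (l : List A) (K : Ideal A), SeqReg K l →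
    NzdMod (K ⊔ Ideal.span {a | a ∈ l}) x → SeqReg K (l ++ [x])
  | [], K, _, h => by
    refine ⟨h.congr ?_, trivial⟩
    rw [span_list_nil, sup_bot_eq]
  | y :: l, K, h0, h => by
    obtain ⟨h1, h2⟩ := h0
    refine ⟨h1, seqReg_snoc l (K ⊔ Ideal.span {y}) h2 (h.congr ?_)⟩
    rw [span_list_cons, ← sup_assoc]

lemma seqReg_take : ∀ (l : List A) (K : Ideal A) (k : ℕ), SeqReg K l → SeqReg K (l.take k)
  | [], K, k, h => by rwa [List.take_nil]
  | _ :: _, _, 0, _ => trivial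
  | x :: l, K, k + 1, h => ⟨h.1, seqReg_take l _ k h.2⟩

lemma seqReg_nzd_prefix : ∀ (l : List A) (K : Ideal A) (k : ℕ) (hk : k < l.length),
    SeqReg K l → NzdMod (K ⊔ Ideal.span {a | a ∈ l.take k}) (l.get ⟨k, hk⟩)
  | x :: l, K, 0, _, h => by
    refine h.1.congr ?_
    rw [List.take_zero, span_list_nil, sup_bot_eq]
  | x :: l, K, k + 1, hk, h => by
    have hk' : k < l.length := by
      simpa using Nat.lt_of_succ_lt_succ hk
    have ih := seqReg_nzd_prefix l (K ⊔ Ideal.span {x}) k hk' h.2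
    refine ih.congr ?_
    rw [List.take_succ_cons, span_list_cons, ← sup_assoc]

lemma pir_equiv : ∀ (l : List A) {N N' : Type u} [AddCommGroup N] [Module A N]
    [AddCommGroup N'] [Module A N'] (e : N ≃ₗ[A] N'),
    PossiblyImproperRegular A l N → PossiblyImproperRegular A l N'
  | [], N, N', _, _, _, _, _, _ => trivial
  | x :: l, N, N', _, _, _, _, e, h => by
    obtain ⟨h1, h2⟩ := h
    refine ⟨fun m hm => ?_, ?_⟩
    · have hs : x • e.symm m = e.symm (x • m) := (map_smul e.symm x m).symm
      have h0 : e.symm m = 0 := h1 _ (by rw [hs, hm, map_zero])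
      have := congrArg e h0
      simpa using this
    · refine pir_equiv l (Submodule.Quotient.equiv _ _ e ?_) h2
      have hb : Submodule.map (e : N →ₗ[A] N') (Ideal.span {x} • (⊤ : Submodule A N))
          = Submodule.map e.toLinearMap (Ideal.span {x} • ⊤) := rfl
      rw [hb, Submodule.map_smul'', Submodule.map_top, LinearEquiv.range]

/-- the double quotient `(A/K)/(x)` is `A/(K + (x))` -/
lemma quot_span_smul_top_eq (K : Ideal A) (x : A) :
    (Ideal.span {x} • (⊤ : Submodule A (A ⧸ K))) =
      Submodule.map K.mkQ (K ⊔ Ideal.span {x}) := by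
  rw [Ideal.smul_top_eq_map]
  ext m
  obtain ⟨y, rfl⟩ := Submodule.Quotient.mk_surjective K m
  simp only [Submodule.restrictScalars_mem, Submodule.mem_map]
  constructor
  · intro hm
    rw [Ideal.map_span, Set.image_singleton, Ideal.mem_span_singleton'] at hm
    obtain ⟨c, hc⟩ := hm
    obtain ⟨c', rfl⟩ := Ideal.Quotient.mk_surjective c
    refine ⟨c' * x, Submodule.mem_sup_right (Ideal.mem_span_singleton'.2 ⟨c', rfl⟩), ?_⟩
    rw [← hc]
    rfl
  · rintro ⟨y', hy', hyy⟩
    rw [Submodule.mem_sup] at hy'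
    obtain ⟨k, hk, z, hz, rfl⟩ := hy'
    obtain ⟨c, rfl⟩ := Ideal.mem_span_singleton'.1 hz
    rw [← hyy]
    have he : (K.mkQ) (k + c * x) = Ideal.Quotient.mk K c * Ideal.Quotient.mk K x := by
      have hk0 : (K.mkQ) k = 0 := by
        rwa [Submodule.mkQ_apply, Submodule.Quotient.mk_eq_zero]
      rw [map_add, hk0, zero_add]
      rfl
    rw [he]
    exact Ideal.mul_mem_left _ _ (Ideal.mem_map_of_mem _ (Ideal.subset_span rfl))

lemma pir_iff_seqReg : ∀ (l : List A) (K : Ideal A),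
    PossiblyImproperRegular A l (A ⧸ K) ↔ SeqReg K l
  | [], K => iff_of_true trivial trivial
  | x :: l, K => by
    have hE : ((A ⧸ K) ⧸ (Ideal.span {x} • (⊤ : Submodule A (A ⧸ K)))) ≃ₗ[A]
        A ⧸ (K ⊔ Ideal.span {x}) :=
      (Submodule.quotEquivOfEq _ _ (quot_span_smul_top_eq K x)) ≪≫ₗ
        Submodule.quotientQuotientEquivQuotient K (K ⊔ Ideal.span {x}) le_sup_left
    constructor
    · rintro ⟨h1, h2⟩
      refine ⟨fun y hy => ?_, (pir_iff_seqReg l _).1 (pir_equiv l hE h2)⟩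
      have hz : x • (Submodule.Quotient.mk y : A ⧸ K) = 0 := by
        rw [← Submodule.Quotient.mk_smul, smul_eq_mul, Submodule.Quotient.mk_eq_zero]
        exact hy
      have := h1 _ hz
      rwa [Submodule.Quotient.mk_eq_zero] at this
    · rintro ⟨h1, h2⟩
      refine ⟨fun m hm => ?_, pir_equiv l hE.symm ((pir_iff_seqReg l _).2 h2)⟩
      obtain ⟨y, rfl⟩ := Submodule.Quotient.mk_surjective K m
      rw [← Submodule.Quotient.mk_smul, smul_eq_mul, Submodule.Quotient.mk_eq_zero] at hm
      rw [Submodule.Quotient.mk_eq_zero]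
      exact h1 y hm

lemma pir_bot_iff_seqReg (l : List A) :
    PossiblyImproperRegular A l A ↔ SeqReg (⊥ : Ideal A) l := by
  constructor
  · intro h
    exact (pir_iff_seqReg l ⊥).1 (pir_equiv l (Submodule.quotEquivOfEqBot ⊥ rfl).symm h)
  · intro h
    exact pir_equiv l (Submodule.quotEquivOfEqBot ⊥ rfl) ((pir_iff_seqReg l ⊥).2 h)

lemma nzd_map_C {σ : Type*} {K : Ideal A} {x : A} (h : NzdMod K x) :
    NzdMod (K.map (algebraMap A (MvPolynomial σ A))) (algebraMap A (MvPolynomial σ A) x) := by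
  intro p hp
  rw [MvPolynomial.algebraMap_eq] at hp ⊢
  rw [MvPolynomial.mem_map_C_iff] at hp ⊢
  intro mdeg
  have hm := hp mdeg
  rw [MvPolynomial.coeff_C_mul] at hm
  exact h _ hm

lemma strong_take {l : List A} (hl : IsStrongParamSeq l) (k : ℕ) :
    IsStrongParamSeq (l.take k) := by
  intro i hi
  rw [List.length_take] at hi
  rw [List.take_take]
  have hik : min i k = i := by omega
  rw [hik]
  exact hl i (by omega)

lemma key_nzd {l : List A} {n : ℕ} (hn : n < l.length)
    (hpg : pgrade (Ideal.span {b | b ∈ l.take (n + 1)}) = ((l.take (n + 1)).length : ℕ∞))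
    (hprev : SeqReg (⊥ : Ideal A) (l.take n)) :
    NzdMod (Ideal.span {b | b ∈ l.take n}) (l.get ⟨n, hn⟩) := by
  set lp := l.take (n + 1) with hlp
  have hlplen : lp.length = n + 1 := by rw [hlp, List.length_take]; omega
  have hlt : ((n : ℕ∞)) < pgrade (Ideal.span {b | b ∈ lp}) := by
    rw [hpg, hlplen]
    exact_mod_cast Nat.lt_succ_self n
  rw [pgrade, lt_iSup_iff] at hlt
  obtain ⟨m, hlt⟩ := hlt
  set S := MvPolynomial (Fin m) A with hS
  rw [classicalGrade, lt_iSup_iff] at hlt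
  obtain ⟨glist, hlt⟩ := hlt
  rw [lt_iSup_iff] at hlt
  obtain ⟨hgmem, hlt⟩ := hlt
  rw [lt_iSup_iff] at hlt
  obtain ⟨hgpir, hlt⟩ := hlt
  have hglen : n + 1 ≤ glist.length := by exact_mod_cast hlt
  set a : Fin lp.length → S := fun k => algebraMap A S (lp.get k) with ha
  have hrange : Ideal.span (Set.range a) =
      (Ideal.span {b | b ∈ lp}).map (algebraMap A S) := by
    rw [Ideal.map_span]
    congr 1
    ext b
    constructor
    · rintro ⟨k, rfl⟩
      exact ⟨lp.get k, lp.get_mem k, rfl⟩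
    · rintro ⟨y, hy, rfl⟩
      obtain ⟨k, rfl⟩ := List.mem_iff_get.1 hy
      exact ⟨k, rfl⟩
  set g' := glist.take lp.length with hg'
  have hg'reg : SeqReg (⊥ : Ideal S) g' := by
    refine seqReg_take glist ⊥ _ ?_
    exact (pir_bot_iff_seqReg glist).1 hgpir
  have hg'mem : ∀ b ∈ g', b ∈ Ideal.span (Set.range a) := by
    intro b hb
    rw [hrange]
    exact hgmem b (List.mem_of_mem_take hb)
  have hvan0 : Van a (⊥ : Ideal S) lp.length := by
    have hlen' : g'.length = lp.length := by
      rw [hg', List.length_take]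
      omega
    have hv := van_of_seqReg a g' ⊥ hg'mem hg'reg
    rwa [hlen'] at hv
  have cuts : ∀ k, k ≤ n →
      Van a ((Ideal.span {b | b ∈ l.take k}).map (algebraMap A S)) (lp.length - k) := by
    intro k
    induction k with
    | zero =>
      intro _
      have h0 : (Ideal.span {b | b ∈ l.take 0}).map (algebraMap A S) = ⊥ := by
        rw [List.take_zero, span_list_nil, Ideal.map_bot]
      rw [h0, Nat.sub_zero]
      exact hvan0
    | succ k IH =>
      intro hk1
      have hkl : k < l.length := by omega
      have hVk := IH (by omega)
      have hxk : NzdMod (Ideal.span {b | b ∈ l.take k}) (l.get ⟨k, hkl⟩) := by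
        have h1 := seqReg_nzd_prefix (l.take n) ⊥ k (by rw [List.length_take]; omega) hprev
        have e1 : (l.take n).take k = l.take k := by
          rw [List.take_take]
          congr 1
          omega
        have e2 : (l.take n).get ⟨k, by rw [List.length_take]; omega⟩ = l.get ⟨k, hkl⟩ := by
          simp [List.getElem_take]
        rw [bot_sup_eq, e1, e2] at h1
        exact h1
      have hxkS : NzdMod ((Ideal.span {b | b ∈ l.take k}).map (algebraMap A S))
          (algebraMap A S (l.get ⟨k, hkl⟩)) := nzd_map_C hxk
      have harith : lp.length - k = (lp.length - (k + 1)) + 1 := by omega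
      rw [harith] at hVk
      have hcut := van_cut a hVk hxkS
      have htake : l.take (k + 1) = l.take k ++ [l.get ⟨k, hkl⟩] := by
        rw [List.take_succ]
        simp [List.getElem?_eq_getElem hkl]
      have hidl : ((Ideal.span {b | b ∈ l.take k}).map (algebraMap A S)) ⊔
          Ideal.span {algebraMap A S (l.get ⟨k, hkl⟩)} =
          (Ideal.span {b | b ∈ l.take (k + 1)}).map (algebraMap A S) := by
        rw [htake, span_list_append, Ideal.map_sup]
        congr 1
        rw [Ideal.map_span, Set.image_singleton]
      rw [hidl] at hcut
      exact hcut
  have hfin := cuts n le_rfl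
  have harith3 : lp.length - n = 1 := by omega
  rw [harith3] at hfin
  intro y hy
  set Kn := (Ideal.span {b | b ∈ l.take n}).map (algebraMap A S) with hKn
  have hcoc : ∀ t : Finset (Fin lp.length), t.card = 0 + 1 →
      kd a (fun _ => algebraMap A S y) t ∈ Kn := by
    intro t ht
    rw [zero_add] at ht
    obtain ⟨k0, rfl⟩ := Finset.card_eq_one.1 ht
    have hkd : kd a (fun _ => algebraMap A S y) {k0} = a k0 * algebraMap A S y := by
      rw [kd, Finset.sum_singleton, eps_singleton, one_mul]
    rw [hkd]
    have hk0 : (k0 : ℕ) < n + 1 := by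
      have hh := k0.isLt
      omega
    have hgetk : lp.get k0 = l.get ⟨(k0 : ℕ), by omega⟩ := by
      simp [hlp, List.getElem_take]
    by_cases hc : (k0 : ℕ) = n
    · have hak : a k0 = algebraMap A S (l.get ⟨n, hn⟩) := by
        show algebraMap A S (lp.get k0) = _
        rw [hgetk]
        exact congrArg (algebraMap A S) (congrArg l.get (Fin.ext hc))
      have hmul : algebraMap A S (l.get ⟨n, hn⟩) * algebraMap A S y
          = algebraMap A S (l.get ⟨n, hn⟩ * y) := (map_mul _ _ _).symm
      rw [hak, hmul]
      exact Ideal.mem_map_of_mem _ hy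
    · have hklt : (k0 : ℕ) < n := by omega
      have hmem : l.get ⟨(k0 : ℕ), by omega⟩ ∈ {b | b ∈ l.take n} := by
        show l.get _ ∈ l.take n
        have hlen4 : (k0 : ℕ) < (l.take n).length := by
          have h9 : (l.take n).length = n := by rw [List.length_take]; omega
          omega
        have e3 : (l.take n).get ⟨(k0 : ℕ), hlen4⟩
            = l.get ⟨(k0 : ℕ), by omega⟩ := by
          simp [List.getElem_take]
        have h4 := List.get_mem (l.take n) ⟨(k0 : ℕ), hlen4⟩
        rw [e3] at h4
        exact h4
      have hak : a k0 = algebraMap A S (l.get ⟨(k0 : ℕ), by omega⟩) := by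
        show algebraMap A S (lp.get k0) = _
        rw [hgetk]
      rw [hak]
      exact Ideal.mul_mem_right _ _ (Ideal.mem_map_of_mem _ (Ideal.subset_span hmem))
  obtain ⟨w, hw⟩ := hfin 0 (by omega) _ hcoc
  have hempty := hw ∅ Finset.card_empty
  have hkd0 : kd a w ∅ = 0 := by rw [kd, Finset.sum_empty]
  rw [hkd0, sub_zero] at hempty
  rw [hKn] at hempty
  have h5 : (MvPolynomial.C y : MvPolynomial (Fin m) A) ∈
      Ideal.map (MvPolynomial.C : A →+* MvPolynomial (Fin m) A)
        (Ideal.span {b | b ∈ l.take n}) := by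
    rw [← MvPolynomial.algebraMap_eq]
    exact hempty
  rw [MvPolynomial.mem_map_C_iff] at h5
  have hc0 := h5 0
  rwa [MvPolynomial.coeff_C, if_pos rfl] at hc0

end Plumbing

end StmtAux

/-- If every strong parameter sequence `x` on `R` satisfies `p-grade((x)R, R) = ℓ(x)`, then
every strong parameter sequence on `R` is a regular sequence, i.e. `R` is Cohen-Macaulay. -/
theorem stmt_12 {R : Type u} [CommRing R]
    (h : ∀ l : List R, IsStrongParamSeq l →
      pgrade (Ideal.span {a | a ∈ l}) = (l.length : ℕ∞)) :
    ∀ l : List R, IsStrongParamSeq l → IsRegularSeq R l := by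
  intro l hl
  have hparam := hl l.length le_rfl
  rw [List.take_length] at hparam
  have hkey : ∀ n, n ≤ l.length → StmtAux.SeqReg (⊥ : Ideal R) (l.take n) := by
    intro n
    induction n with
    | zero =>
      intro _
      rw [List.take_zero]
      trivial
    | succ n IH =>
      intro hn1
      have hn : n < l.length := hn1
      have hprev := IH (by omega)
      have hstrong : IsStrongParamSeq (l.take (n + 1)) := StmtAux.strong_take hl (n + 1)
      have hpg := h (l.take (n + 1)) hstrong
      have hnzd := StmtAux.key_nzd hn hpg hprev
      have hsnoc := StmtAux.seqReg_snoc (l.take n) ⊥ hprev (hnzd.congr (bot_sup_eq _).symm)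
      have htake : l.take (n + 1) = l.take n ++ [l.get ⟨n, hn⟩] := by
        rw [List.take_succ]
        simp [List.getElem?_eq_getElem hn]
      rw [htake]
      exact hsnoc
  constructor
  · have hseq := hkey l.length le_rfl
    rw [List.take_length] at hseq
    exact (StmtAux.pir_bot_iff_seqReg l).2 hseq
  · exact hparam.2.1


end
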